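/- Let (E,C) be a finite bipartite separated graph. The assignment Φ(Σ_{u∈E^{0,0}} Σ_{i=1}^{k_u} nᵢᵘ δ_{Xᵢᵘ}) = Σ_{u∈E^{0,0}} Σ_{i=2}^{k_u} nᵢᵘ γᵢᵘ defines a well-defined group isomorphism Φ from ker(1_C − A_{(E,C)}) onto {z ∈ Z₁ : s_*(z) = 0}, whose inverse Υ sends Σ_{u} Σ_{i=2}^{k_u} nᵢᵘ γᵢᵘ to Σ_{u} Σ_{i=1}^{k_u} nᵢᵘ δ_{Xᵢᵘ}, where n₁ᵘ := −Σ_{i=2}^{k_u} nᵢᵘ. -/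

import Mathlib

-- The canonical basis element `δ_q` of the free abelian group of functions.
open Classical in
noncomputable def deltaFn {α : Type} (q : α) : α → ℤ := fun p => if p = q then 1 else 0

/-- A bipartite separated graph, with the classes of `C_u` enumerated as
`X u 0, …, X u (k u − 1)` for every `u ∈ E^{0,0}`. -/
structure BipGraphIdx where
  V0 : Type
  V1 : Type
  E : Type
  s : E → V1
  r : E → V0
  k : V0 → ℕ
  X : (u : V0) → Fin (k u) → Set E

/-- `(E,C)` is a finite bipartite separated graph. -/
structure BipGraphIdx.Valid (G : BipGraphIdx) : Prop where
  finV0 : Finite G.V0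
  finV1 : Finite G.V1
  finE : Finite G.E
  mem_r : ∀ u i, ∀ e ∈ G.X u i, G.r e = u
  nonempty : ∀ u i, (G.X u i).Nonempty
  disj : ∀ u, ∀ i j : Fin (G.k u), i ≠ j → Disjoint (G.X u i) (G.X u j)
  inj : ∀ u, Function.Injective (G.X u)
  cover : ∀ e : G.E, ∃ i, e ∈ G.X (G.r e) i
  kpos : ∀ u, 0 < G.k u
  s_surj : Function.Surjective G.s

-- The element `γᵢᵘ = Σ_{x∈X₁ᵘ} δ_x − Σ_{y∈Xᵢᵘ} δ_y ∈ ℤ^(E¹)`.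
open Classical in
noncomputable def gammaB (G : BipGraphIdx) (hk : ∀ u, 0 < G.k u) (u : G.V0)
    (i : Fin (G.k u)) : G.E → ℤ :=
  fun e => (if e ∈ G.X u ⟨0, hk u⟩ then 1 else 0) - (if e ∈ G.X u i then 1 else 0)

/-- The subgroup `Z₁ ⊆ ℤ^(E¹)` generated by the `γᵢᵘ`, `2 ≤ i ≤ k_u`, `u ∈ E^{0,0}`. -/
noncomputable def Z1 (G : BipGraphIdx) (hk : ∀ u, 0 < G.k u) : Submodule ℤ (G.E → ℤ) :=
  Submodule.span ℤ
    {z : G.E → ℤ | ∃ u i, i ≠ (⟨0, hk u⟩ : Fin (G.k u)) ∧ z = gammaB G hk u i}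

open Classical

-- finsum over a set on a Fintype
lemma myFinsumToFinset {α β : Type*} [Fintype α] [AddCommMonoid β]
    (s : Set α) (f : α → β) : (∑ᶠ x ∈ s, f x) = ∑ x ∈ s.toFinset, f x := by
  rw [← Set.coe_toFinset s, finsum_mem_coe_finset, Set.coe_toFinset]

lemma fun_eq_sum_delta {α : Type} [Fintype α] (z : α → ℤ) :
    z = ∑ p, z p • deltaFn p := by
  funext q
  rw [Finset.sum_apply]
  simp [deltaFn]

lemma sum_ne_zero_eq {m : ℕ} (hm : 0 < m) (f : Fin m → ℤ) :
    ∑ i ∈ Finset.univ.filter (fun i => i ≠ (⟨0, hm⟩ : Fin m)), f i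
      = (∑ i, f i) - f ⟨0, hm⟩ := by
  have h := Finset.sum_filter_add_sum_filter_not Finset.univ
    (fun i => i = (⟨0, hm⟩ : Fin m)) f
  have h2 : Finset.univ.filter (fun i => i = (⟨0, hm⟩ : Fin m)) = {(⟨0, hm⟩ : Fin m)} := by
    ext j; simp
  rw [h2, Finset.sum_singleton] at h
  have h3 : (Finset.univ.filter (fun i => ¬ i = (⟨0, hm⟩ : Fin m)))
      = Finset.univ.filter (fun i => i ≠ (⟨0, hm⟩ : Fin m)) := rfl
  rw [h3] at h
  omega

open Classical

lemma mem_X_eq (G : BipGraphIdx) (hG : G.Valid) {u u' : G.V0} {i : Fin (G.k u)}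
    {j : Fin (G.k u')} {e : G.E} (he : e ∈ G.X u i) (he' : e ∈ G.X u' j) :
    (⟨u, i⟩ : Σ v, Fin (G.k v)) = ⟨u', j⟩ := by
  have hu : u = u' := by rw [← hG.mem_r u i e he, hG.mem_r u' j e he']
  subst hu
  rcases eq_or_ne i j with h | h
  · subst h; rfl
  · exact absurd he' (Set.disjoint_left.mp (hG.disj u i j h) he)

lemma ind_eq (G : BipGraphIdx) (hG : G.Valid) {u u' : G.V0} {i : Fin (G.k u)}
    (m : Fin (G.k u')) {e : G.E} (he : e ∈ G.X u i) :
    (if e ∈ G.X u' m then (1:ℤ) else 0) =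
      (if (⟨u', m⟩ : Σ v, Fin (G.k v)) = ⟨u, i⟩ then 1 else 0) := by
  by_cases h : (⟨u', m⟩ : Σ v, Fin (G.k v)) = ⟨u, i⟩
  · obtain ⟨h1, h2⟩ := Sigma.mk.inj_iff.mp h
    subst h1
    rw [if_pos h, if_pos ((eq_of_heq h2) ▸ he)]
  · rw [if_neg h, if_neg (fun hmem => h (mem_X_eq G hG hmem he))]

lemma gamma_apply (G : BipGraphIdx) (hG : G.Valid) {u u' : G.V0} {i : Fin (G.k u)}
    (j : Fin (G.k u')) {e : G.E} (he : e ∈ G.X u i) :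
    gammaB G hG.kpos u' j e =
      (if (⟨u', ⟨0, hG.kpos u'⟩⟩ : Σ v, Fin (G.k v)) = ⟨u, i⟩ then 1 else 0)
        - (if (⟨u', j⟩ : Σ v, Fin (G.k v)) = ⟨u, i⟩ then 1 else 0) := by
  unfold gammaB
  rw [ind_eq G hG _ he, ind_eq G hG _ he]

open Classical in
noncomputable def sumXd (G : BipGraphIdx) (p : Σ u : G.V0, Fin (G.k u)) : G.V1 → ℤ :=
  ∑ᶠ x ∈ G.X p.1 p.2, deltaFn (G.s x)

lemma lin_apply {α : Type} [Fintype α] {M : Type} [AddCommMonoid M] [Module ℤ M]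
    (f : (α → ℤ) →ₗ[ℤ] M) (z : α → ℤ) : f z = ∑ p, z p • f (deltaFn p) := by
  conv_lhs => rw [fun_eq_sum_delta z]
  rw [map_sum]
  exact Finset.sum_congr rfl fun p _ => map_smul f (z p) (deltaFn p)

open Classical in
lemma gamma_eq_sum (G : BipGraphIdx) (hG : G.Valid) [Fintype G.E] (u : G.V0)
    (i : Fin (G.k u)) :
    gammaB G hG.kpos u i = (∑ e ∈ (G.X u ⟨0, hG.kpos u⟩).toFinset, deltaFn e)
      - ∑ e ∈ (G.X u i).toFinset, deltaFn e := by
  funext e'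
  simp only [Pi.sub_apply, Finset.sum_apply, gammaB, deltaFn]
  rw [Finset.sum_ite_eq (G.X u ⟨0, hG.kpos u⟩).toFinset e' (fun _ => (1:ℤ)),
    Finset.sum_ite_eq (G.X u i).toFinset e' (fun _ => (1:ℤ))]
  simp only [Set.mem_toFinset]

open Classical in
lemma sstar_gamma (G : BipGraphIdx) (hG : G.Valid) [Fintype G.E]
    (sstar : (G.E → ℤ) →ₗ[ℤ] (G.V1 → ℤ)) (hs : ∀ x : G.E, sstar (deltaFn x) = deltaFn (G.s x))
    (u : G.V0) (i : Fin (G.k u)) :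
    sstar (gammaB G hG.kpos u i)
      = sumXd G ⟨u, ⟨0, hG.kpos u⟩⟩ - sumXd G ⟨u, i⟩ := by
  rw [gamma_eq_sum G hG u i, map_sub, map_sum, map_sum]
  simp_rw [hs]
  unfold sumXd
  rw [myFinsumToFinset, myFinsumToFinset]

open Classical in
lemma Phi_apply (G : BipGraphIdx) (hG : G.Valid) [Fintype G.V0]
    (Φ : ((Σ u : G.V0, Fin (G.k u)) → ℤ) →ₗ[ℤ] (G.E → ℤ))
    (hΦ : ∀ p : Σ u : G.V0, Fin (G.k u),
      Φ (deltaFn p) = if p.2 = (⟨0, hG.kpos p.1⟩ : Fin (G.k p.1)) then 0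
        else gammaB G hG.kpos p.1 p.2)
    (z : (Σ u : G.V0, Fin (G.k u)) → ℤ) {u : G.V0} {i : Fin (G.k u)} {e : G.E}
    (he : e ∈ G.X u i) :
    Φ z e = if i = (⟨0, hG.kpos u⟩ : Fin (G.k u))
      then ∑ j ∈ Finset.univ.filter (fun j => j ≠ (⟨0, hG.kpos u⟩ : Fin (G.k u))), z ⟨u, j⟩
      else - z ⟨u, i⟩ := by
  rw [lin_apply Φ z, Finset.sum_apply]
  have hterm : ∀ p : Σ v : G.V0, Fin (G.k v), (z p • Φ (deltaFn p)) e
      = if p.2 = (⟨0, hG.kpos p.1⟩ : Fin (G.k p.1)) then 0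
        else z p * ((if (⟨p.1, ⟨0, hG.kpos p.1⟩⟩ : Σ v : G.V0, Fin (G.k v)) = ⟨u, i⟩
            then 1 else 0)
          - (if (⟨p.1, p.2⟩ : Σ v : G.V0, Fin (G.k v)) = ⟨u, i⟩ then 1 else 0)) := by
    intro p
    rw [Pi.smul_apply, hΦ p]
    by_cases h : p.2 = (⟨0, hG.kpos p.1⟩ : Fin (G.k p.1))
    · rw [if_pos h, if_pos h]; simp
    · rw [if_neg h, if_neg h, gamma_apply G hG p.2 he, smul_eq_mul]
  rw [Finset.sum_congr rfl (fun p _ => hterm p)]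
  by_cases hi : i = (⟨0, hG.kpos u⟩ : Fin (G.k u))
  · rw [if_pos hi]; subst hi
    have h2 : ∀ p : Σ v : G.V0, Fin (G.k v),
        (if p.2 = (⟨0, hG.kpos p.1⟩ : Fin (G.k p.1)) then 0
          else z p * ((if (⟨p.1, ⟨0, hG.kpos p.1⟩⟩ : Σ v : G.V0, Fin (G.k v))
              = ⟨u, ⟨0, hG.kpos u⟩⟩ then 1 else 0)
            - (if (⟨p.1, p.2⟩ : Σ v : G.V0, Fin (G.k v)) = ⟨u, ⟨0, hG.kpos u⟩⟩
              then 1 else 0)))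
        = if p.2 = (⟨0, hG.kpos p.1⟩ : Fin (G.k p.1)) then 0
          else if p.1 = u then z p else 0 := by
      intro p
      by_cases h : p.2 = (⟨0, hG.kpos p.1⟩ : Fin (G.k p.1))
      · rw [if_pos h, if_pos h]
      · rw [if_neg h, if_neg h]
        have hc2 : ¬ ((⟨p.1, p.2⟩ : Σ v : G.V0, Fin (G.k v)) = ⟨u, ⟨0, hG.kpos u⟩⟩) := by
          intro hc
          obtain ⟨h1, h2⟩ := Sigma.mk.inj_iff.mp hc
          subst h1
          exact h (eq_of_heq h2)
        rw [if_neg hc2]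
        by_cases hc1 : p.1 = u
        · subst hc1
          rw [if_pos rfl, if_pos rfl]
          ring
        · have : ¬ ((⟨p.1, ⟨0, hG.kpos p.1⟩⟩ : Σ v : G.V0, Fin (G.k v))
              = ⟨u, ⟨0, hG.kpos u⟩⟩) := by
            intro hc; exact hc1 (Sigma.mk.inj_iff.mp hc).1
          rw [if_neg this, if_neg hc1]
          ring
    rw [Finset.sum_congr rfl (fun p _ => h2 p), ← Finset.univ_sigma_univ, Finset.sum_sigma]
    have h3 : ∀ a : G.V0, (∑ j : Fin (G.k a),
        if j = (⟨0, hG.kpos a⟩ : Fin (G.k a)) then 0 else if a = u then z ⟨a, j⟩ else 0)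
        = if a = u then
            ∑ j ∈ Finset.univ.filter (fun j => j ≠ (⟨0, hG.kpos u⟩ : Fin (G.k u))), z ⟨u, j⟩
          else 0 := by
      intro a
      by_cases ha : a = u
      · subst ha
        rw [if_pos rfl, Finset.sum_filter]
        apply Finset.sum_congr rfl
        intro j _
        by_cases hj : j = (⟨0, hG.kpos a⟩ : Fin (G.k a))
        · rw [if_pos hj, if_neg (by simpa using hj)]
        · rw [if_neg hj, if_pos rfl, if_pos hj]
      · rw [if_neg ha]
        apply Finset.sum_eq_zero
        intro j _
        by_cases hj : j = (⟨0, hG.kpos a⟩ : Fin (G.k a))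
        · rw [if_pos hj]
        · rw [if_neg hj, if_neg ha]
    rw [Finset.sum_congr rfl (fun a _ => h3 a), Finset.sum_ite_eq' Finset.univ u]
    simp
  · rw [if_neg hi]
    have h2 : ∀ p : Σ v : G.V0, Fin (G.k v),
        (if p.2 = (⟨0, hG.kpos p.1⟩ : Fin (G.k p.1)) then 0
          else z p * ((if (⟨p.1, ⟨0, hG.kpos p.1⟩⟩ : Σ v : G.V0, Fin (G.k v))
              = ⟨u, i⟩ then 1 else 0)
            - (if (⟨p.1, p.2⟩ : Σ v : G.V0, Fin (G.k v)) = ⟨u, i⟩ then 1 else 0)))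
        = if p = ⟨u, i⟩ then - z ⟨u, i⟩ else 0 := by
      intro p
      have hc1 : ¬ ((⟨p.1, ⟨0, hG.kpos p.1⟩⟩ : Σ v : G.V0, Fin (G.k v)) = ⟨u, i⟩) := by
        intro hc
        obtain ⟨h1, h2⟩ := Sigma.mk.inj_iff.mp hc
        subst h1
        exact hi (eq_of_heq h2).symm
      rw [if_neg hc1]
      by_cases hp : p = ⟨u, i⟩
      · subst hp
        rw [if_pos rfl, if_neg (by simpa using hi), if_pos rfl]
        ring
      · have hp' : ¬ ((⟨p.1, p.2⟩ : Σ v : G.V0, Fin (G.k v)) = ⟨u, i⟩) := by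
          rw [Sigma.eta]; exact hp
        rw [if_neg hp', if_neg hp]
        by_cases h : p.2 = (⟨0, hG.kpos p.1⟩ : Fin (G.k p.1))
        · rw [if_pos h]
        · rw [if_neg h]; ring
    rw [Finset.sum_congr rfl (fun p _ => h2 p), Finset.sum_ite_eq' Finset.univ (⟨u, i⟩ : Σ v : G.V0, Fin (G.k v))]
    simp

open Classical in
lemma eval_delta_sum (G : BipGraphIdx) [Fintype G.V0]
    (z : (Σ u : G.V0, Fin (G.k u)) → ℤ) (u : G.V0) :
    (∑ p : Σ v : G.V0, Fin (G.k v), z p • deltaFn p.1) u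
      = ∑ i : Fin (G.k u), z ⟨u, i⟩ := by
  rw [Finset.sum_apply, ← Finset.univ_sigma_univ, Finset.sum_sigma]
  have h : ∀ a : G.V0, (∑ j : Fin (G.k a), (z ⟨a, j⟩ • deltaFn a) u)
      = if u = a then ∑ j : Fin (G.k a), z ⟨a, j⟩ else 0 := by
    intro a
    by_cases h : u = a
    · subst h; simp [deltaFn]
    · simp [deltaFn, if_neg h]
  rw [Finset.sum_congr rfl fun a _ => h a, Finset.sum_ite_eq Finset.univ u]
  simp

open Classical in
lemma ker_char (G : BipGraphIdx) (hG : G.Valid) [Fintype G.V0]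
    (oneC Amap : ((Σ u : G.V0, Fin (G.k u)) → ℤ) →ₗ[ℤ] ((G.V0 → ℤ) × (G.V1 → ℤ)))
    (h1 : ∀ p : Σ u : G.V0, Fin (G.k u), oneC (deltaFn p) = (deltaFn p.1, 0))
    (hA : ∀ p : Σ u : G.V0, Fin (G.k u),
      Amap (deltaFn p) = (0, ∑ᶠ x ∈ G.X p.1 p.2, deltaFn (G.s x)))
    (z : (Σ u : G.V0, Fin (G.k u)) → ℤ) :
    z ∈ LinearMap.ker (oneC - Amap) ↔
      ((∀ u : G.V0, ∑ i : Fin (G.k u), z ⟨u, i⟩ = 0)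
        ∧ (∑ p : Σ u : G.V0, Fin (G.k u), z p • sumXd G p) = 0) := by
  have hone : oneC z = ∑ p : Σ u : G.V0, Fin (G.k u), z p • ((deltaFn p.1 : G.V0 → ℤ), (0 : G.V1 → ℤ)) := by
    rw [lin_apply oneC z]
    exact Finset.sum_congr rfl fun p _ => by rw [h1 p]
  have hAm : Amap z = ∑ p : Σ u : G.V0, Fin (G.k u), z p • ((0 : G.V0 → ℤ), sumXd G p) := by
    rw [lin_apply Amap z]
    exact Finset.sum_congr rfl fun p _ => by rw [hA p]; rfl
  rw [LinearMap.mem_ker, LinearMap.sub_apply, sub_eq_zero, hone, hAm]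
  rw [Prod.ext_iff]
  simp only [Prod.fst_sum, Prod.snd_sum, Prod.smul_mk, Prod.mk.injEq, smul_zero,
    Finset.sum_const_zero]
  constructor
  · rintro ⟨hfst, hsnd⟩
    constructor
    · intro u
      rw [← eval_delta_sum G z u, hfst]
      simp
    · exact hsnd.symm
  · rintro ⟨hfst, hsnd⟩
    constructor
    · funext u
      rw [eval_delta_sum G z u, hfst u]
      simp
    · exact hsnd.symm

open Classical in
lemma sstar_Phi (G : BipGraphIdx) (hG : G.Valid) [Fintype G.V0] [Fintype G.E]
    (sstar : (G.E → ℤ) →ₗ[ℤ] (G.V1 → ℤ))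
    (hs : ∀ x : G.E, sstar (deltaFn x) = deltaFn (G.s x))
    (Φ : ((Σ u : G.V0, Fin (G.k u)) → ℤ) →ₗ[ℤ] (G.E → ℤ))
    (hΦ : ∀ p : Σ u : G.V0, Fin (G.k u),
      Φ (deltaFn p) = if p.2 = (⟨0, hG.kpos p.1⟩ : Fin (G.k p.1)) then 0
        else gammaB G hG.kpos p.1 p.2)
    (z : (Σ u : G.V0, Fin (G.k u)) → ℤ)
    (hz1 : ∀ u : G.V0, ∑ i : Fin (G.k u), z ⟨u, i⟩ = 0) :
    sstar (Φ z) = - ∑ p : Σ u : G.V0, Fin (G.k u), z p • sumXd G p := by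
  rw [lin_apply Φ z, map_sum]
  have hterm : ∀ p : Σ u : G.V0, Fin (G.k u), sstar (z p • Φ (deltaFn p))
      = (if p.2 = (⟨0, hG.kpos p.1⟩ : Fin (G.k p.1)) then 0
          else z p • sumXd G ⟨p.1, ⟨0, hG.kpos p.1⟩⟩)
        - (if p.2 = (⟨0, hG.kpos p.1⟩ : Fin (G.k p.1)) then 0
          else z p • sumXd G ⟨p.1, p.2⟩) := by
    intro p
    rw [map_smul, hΦ p]
    by_cases h : p.2 = (⟨0, hG.kpos p.1⟩ : Fin (G.k p.1))
    · rw [if_pos h, if_pos h, if_pos h]; simp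
    · rw [if_neg h, if_neg h, if_neg h, sstar_gamma G hG sstar hs p.1 p.2, smul_sub]
  rw [Finset.sum_congr rfl fun p _ => hterm p, Finset.sum_sub_distrib]
  -- first sum A
  have hA : (∑ p : Σ u : G.V0, Fin (G.k u),
      if p.2 = (⟨0, hG.kpos p.1⟩ : Fin (G.k p.1)) then 0
        else z p • sumXd G ⟨p.1, ⟨0, hG.kpos p.1⟩⟩)
      = - ∑ a : G.V0, z ⟨a, ⟨0, hG.kpos a⟩⟩ • sumXd G ⟨a, ⟨0, hG.kpos a⟩⟩ := by
    rw [← Finset.univ_sigma_univ, Finset.sum_sigma]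
    have hinner : ∀ a : G.V0, (∑ j : Fin (G.k a),
        if j = (⟨0, hG.kpos a⟩ : Fin (G.k a)) then 0
          else z ⟨a, j⟩ • sumXd G ⟨a, ⟨0, hG.kpos a⟩⟩)
        = - (z ⟨a, ⟨0, hG.kpos a⟩⟩ • sumXd G ⟨a, ⟨0, hG.kpos a⟩⟩) := by
      intro a
      have step : ∀ j : Fin (G.k a), (if j = (⟨0, hG.kpos a⟩ : Fin (G.k a)) then 0
            else z ⟨a, j⟩ • sumXd G ⟨a, ⟨0, hG.kpos a⟩⟩)
          = (if j = (⟨0, hG.kpos a⟩ : Fin (G.k a)) then 0 else z ⟨a, j⟩)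
              • sumXd G ⟨a, ⟨0, hG.kpos a⟩⟩ := by
        intro j
        by_cases hj : j = (⟨0, hG.kpos a⟩ : Fin (G.k a))
        · rw [if_pos hj, if_pos hj, zero_smul]
        · rw [if_neg hj, if_neg hj]
      rw [Finset.sum_congr rfl fun j _ => step j, ← Finset.sum_smul, ← neg_smul]
      congr 1
      have h2 : (∑ j : Fin (G.k a), if j = (⟨0, hG.kpos a⟩ : Fin (G.k a)) then 0 else z ⟨a, j⟩)
          = ∑ j ∈ Finset.univ.filter (fun j => j ≠ (⟨0, hG.kpos a⟩ : Fin (G.k a))), z ⟨a, j⟩ := by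
        rw [Finset.sum_filter]
        exact Finset.sum_congr rfl fun j _ => by
          by_cases hj : j = (⟨0, hG.kpos a⟩ : Fin (G.k a))
          · rw [if_pos hj, if_neg (by simpa using hj)]
          · rw [if_neg hj, if_pos hj]
      rw [h2, sum_ne_zero_eq (hG.kpos a) (fun j => z ⟨a, j⟩), hz1 a, zero_sub]
    rw [Finset.sum_congr rfl fun a _ => hinner a]
    rw [← Finset.sum_neg_distrib]
  -- second sum B
  have hB : (∑ p : Σ u : G.V0, Fin (G.k u),
      if p.2 = (⟨0, hG.kpos p.1⟩ : Fin (G.k p.1)) then 0 else z p • sumXd G ⟨p.1, p.2⟩)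
      = (∑ p : Σ u : G.V0, Fin (G.k u), z p • sumXd G p)
        - ∑ a : G.V0, z ⟨a, ⟨0, hG.kpos a⟩⟩ • sumXd G ⟨a, ⟨0, hG.kpos a⟩⟩ := by
    have step : ∀ p : Σ u : G.V0, Fin (G.k u),
        (if p.2 = (⟨0, hG.kpos p.1⟩ : Fin (G.k p.1)) then 0 else z p • sumXd G ⟨p.1, p.2⟩)
        = z p • sumXd G p
          - (if p.2 = (⟨0, hG.kpos p.1⟩ : Fin (G.k p.1)) then z p • sumXd G ⟨p.1, p.2⟩
            else 0) := by
      intro p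
      by_cases h : p.2 = (⟨0, hG.kpos p.1⟩ : Fin (G.k p.1))
      · rw [if_pos h, if_pos h]; simp
      · rw [if_neg h, if_neg h]; simp
    rw [Finset.sum_congr rfl fun p _ => step p, Finset.sum_sub_distrib]
    congr 1
    rw [← Finset.univ_sigma_univ, Finset.sum_sigma]
    apply Finset.sum_congr rfl
    intro a _
    rw [Finset.sum_ite_eq' Finset.univ (⟨0, hG.kpos a⟩ : Fin (G.k a))
      (fun j => z ⟨a, j⟩ • sumXd G ⟨a, j⟩)]
    simp
  rw [hA, hB]
  abel

lemma Z1_const (G : BipGraphIdx) (hG : G.Valid) {w : G.E → ℤ}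
    (hw : w ∈ Z1 G hG.kpos) {u : G.V0} {i : Fin (G.k u)} {e e' : G.E}
    (he : e ∈ G.X u i) (he' : e' ∈ G.X u i) : w e = w e' := by
  refine Submodule.span_induction ?_ rfl ?_ ?_ hw
  · rintro x ⟨u', j, -, rfl⟩
    rw [gamma_apply G hG j he, gamma_apply G hG j he']
  · intro x y _ _ hx hy
    simp only [Pi.add_apply, hx, hy]
  · intro a x _ hx
    simp only [Pi.smul_apply, hx]

lemma Z1_sum (G : BipGraphIdx) (hG : G.Valid) [Fintype G.V0] {w : G.E → ℤ}
    (hw : w ∈ Z1 G hG.kpos) (u : G.V0) (es : Fin (G.k u) → G.E)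
    (hes : ∀ i, es i ∈ G.X u i) : ∑ i : Fin (G.k u), w (es i) = 0 := by
  refine Submodule.span_induction ?_ (by simp) ?_ ?_ hw
  · rintro x ⟨u', j, -, rfl⟩
    have key : ∀ m : Fin (G.k u'), (∑ i : Fin (G.k u),
        if (⟨u', m⟩ : Σ v : G.V0, Fin (G.k v)) = ⟨u, i⟩ then (1:ℤ) else 0)
        = if u' = u then 1 else 0 := by
      intro m
      by_cases hu : u' = u
      · subst hu
        rw [if_pos rfl]
        have : ∀ i : Fin (G.k u'), (if (⟨u', m⟩ : Σ v : G.V0, Fin (G.k v)) = ⟨u', i⟩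
            then (1:ℤ) else 0) = if m = i then 1 else 0 := by
          intro i
          simp [Sigma.mk.inj_iff]
        rw [Finset.sum_congr rfl fun i _ => this i, Finset.sum_ite_eq Finset.univ m]
        simp
      · rw [if_neg hu]
        apply Finset.sum_eq_zero
        intro i _
        exact if_neg (fun hc => hu (Sigma.mk.inj_iff.mp hc).1)
    have expand : ∀ i : Fin (G.k u), gammaB G hG.kpos u' j (es i)
        = (if (⟨u', ⟨0, hG.kpos u'⟩⟩ : Σ v : G.V0, Fin (G.k v)) = ⟨u, i⟩ then 1 else 0)
          - (if (⟨u', j⟩ : Σ v : G.V0, Fin (G.k v)) = ⟨u, i⟩ then 1 else 0) :=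
      fun i => gamma_apply G hG j (hes i)
    rw [Finset.sum_congr rfl fun i _ => expand i, Finset.sum_sub_distrib, key, key, sub_self]
  · intro x y _ _ hx hy
    simp only [Pi.add_apply, Finset.sum_add_distrib, hx, hy, add_zero]
  · intro a x _ hx
    simp only [Pi.smul_apply, smul_eq_mul, ← Finset.mul_sum, hx, mul_zero]
/-- Lemma 5.6: the assignment
`Φ(Σ_u Σ_i nᵢᵘ δ_{Xᵢᵘ}) = Σ_u Σ_{i≥2} nᵢᵘ γᵢᵘ` defines a well-defined group
isomorphism from `ker(1_C − A_{(E,C)})` onto `{z ∈ Z₁ : s_*(z) = 0}`, whose inverse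
`Υ` sends `Σ_u Σ_{i≥2} nᵢᵘ γᵢᵘ` to `Σ_u Σ_i nᵢᵘ δ_{Xᵢᵘ}` where
`n₁ᵘ := −Σ_{i≥2} nᵢᵘ`. -/
theorem stmt8 (G : BipGraphIdx) (hG : G.Valid)
    -- the maps 1_C and A_{(E,C)} : ℤ^(C) → ℤ^(E⁰) = ℤ^(E^{0,0}) ⊕ ℤ^(E^{0,1})
    (oneC Amap : ((Σ u : G.V0, Fin (G.k u)) → ℤ) →ₗ[ℤ] ((G.V0 → ℤ) × (G.V1 → ℤ)))
    (h1 : ∀ p : Σ u : G.V0, Fin (G.k u), oneC (deltaFn p) = (deltaFn p.1, 0))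
    (hA : ∀ p : Σ u : G.V0, Fin (G.k u),
      Amap (deltaFn p) = (0, ∑ᶠ x ∈ G.X p.1 p.2, deltaFn (G.s x)))
    (sstar : (G.E → ℤ) →ₗ[ℤ] (G.V1 → ℤ))
    (hs : ∀ x : G.E, sstar (deltaFn x) = deltaFn (G.s x))
    -- the map Φ, determined by Φ(δ_{X₁ᵘ}) = 0 and Φ(δ_{Xᵢᵘ}) = γᵢᵘ for i ≥ 2
    (Φ : ((Σ u : G.V0, Fin (G.k u)) → ℤ) →ₗ[ℤ] (G.E → ℤ))
    (hΦ : ∀ p : Σ u : G.V0, Fin (G.k u),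
      Φ (deltaFn p) = if p.2 = (⟨0, hG.kpos p.1⟩ : Fin (G.k p.1)) then 0
        else gammaB G hG.kpos p.1 p.2) :
    -- Φ is well defined into {z ∈ Z₁ : s_*(z) = 0}
    (∀ z ∈ LinearMap.ker (oneC - Amap), Φ z ∈ Z1 G hG.kpos ⊓ LinearMap.ker sstar) ∧
    -- Φ restricts to a bijection (group isomorphism) between the two groups
    Set.BijOn Φ (LinearMap.ker (oneC - Amap) : Set _)
      ((Z1 G hG.kpos ⊓ LinearMap.ker sstar : Submodule ℤ (G.E → ℤ)) : Set _) ∧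
    -- the inverse Υ: with n₁ᵘ := −Σ_{i≥2} nᵢᵘ, Υ(Σ n γ) = Σ n δ lies in the kernel
    -- and Φ inverts it
    (∀ n : (u : G.V0) → Fin (G.k u) → ℤ,
      (∀ u, n u ⟨0, hG.kpos u⟩ =
        - ∑ i ∈ Finset.univ.filter (fun i => i ≠ (⟨0, hG.kpos u⟩ : Fin (G.k u))), n u i) →
      (∑ᶠ u : G.V0, ∑ i ∈ Finset.univ.filter
          (fun i => i ≠ (⟨0, hG.kpos u⟩ : Fin (G.k u))), n u i • gammaB G hG.kpos u i)
        ∈ LinearMap.ker sstar →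
      ((fun p : Σ u : G.V0, Fin (G.k u) => n p.1 p.2) ∈ LinearMap.ker (oneC - Amap) ∧
        Φ (fun p : Σ u : G.V0, Fin (G.k u) => n p.1 p.2) =
          ∑ᶠ u : G.V0, ∑ i ∈ Finset.univ.filter
            (fun i => i ≠ (⟨0, hG.kpos u⟩ : Fin (G.k u))), n u i • gammaB G hG.kpos u i)) := by
  haveI := hG.finV0
  haveI := hG.finV1
  haveI := hG.finE
  haveI : Fintype G.V0 := Fintype.ofFinite _
  haveI : Fintype G.E := Fintype.ofFinite _
  classical
  -- Φ lands in Z1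
  have hPhi_mem_Z1 : ∀ z, Φ z ∈ Z1 G hG.kpos := by
    intro z
    rw [lin_apply Φ z]
    apply Submodule.sum_mem
    intro p _
    rw [hΦ p]
    by_cases h : p.2 = (⟨0, hG.kpos p.1⟩ : Fin (G.k p.1))
    · rw [if_pos h, smul_zero]
      exact Submodule.zero_mem _
    · rw [if_neg h]
      exact Submodule.smul_mem _ _ (Submodule.subset_span ⟨p.1, p.2, h, rfl⟩)
  have mapsTo : ∀ z ∈ LinearMap.ker (oneC - Amap),
      Φ z ∈ Z1 G hG.kpos ⊓ LinearMap.ker sstar := by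
    intro z hz
    obtain ⟨hz1, hz2⟩ := (ker_char G hG oneC Amap h1 hA z).mp hz
    refine Submodule.mem_inf.mpr ⟨hPhi_mem_Z1 z, ?_⟩
    rw [LinearMap.mem_ker, sstar_Phi G hG sstar hs Φ hΦ z hz1, hz2, neg_zero]
  refine ⟨mapsTo, ⟨fun z hz => mapsTo z hz, ?_, ?_⟩, ?_⟩
  · -- injectivity
    intro z hz z' hz' heq
    have hz1 := ((ker_char G hG oneC Amap h1 hA z).mp hz).1
    have hz1' := ((ker_char G hG oneC Amap h1 hA z').mp hz').1
    have hne : ∀ (u : G.V0) (i : Fin (G.k u)), i ≠ (⟨0, hG.kpos u⟩ : Fin (G.k u)) →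
        z ⟨u, i⟩ = z' ⟨u, i⟩ := by
      intro u i hi
      obtain ⟨e, he⟩ := hG.nonempty u i
      have h1e := Phi_apply G hG Φ hΦ z he
      have h2e := Phi_apply G hG Φ hΦ z' he
      rw [if_neg hi] at h1e h2e
      have hee : Φ z e = Φ z' e := by rw [heq]
      rw [h1e, h2e] at hee
      exact neg_inj.mp hee
    funext p
    obtain ⟨u, i⟩ := p
    by_cases hi : i = (⟨0, hG.kpos u⟩ : Fin (G.k u))
    · subst hi
      have e1 := sum_ne_zero_eq (hG.kpos u) (fun j => z ⟨u, j⟩)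
      have e2 := sum_ne_zero_eq (hG.kpos u) (fun j => z' ⟨u, j⟩)
      have e3 : (∑ j ∈ Finset.univ.filter (fun j => j ≠ (⟨0, hG.kpos u⟩ : Fin (G.k u))),
          z ⟨u, j⟩) = ∑ j ∈ Finset.univ.filter
            (fun j => j ≠ (⟨0, hG.kpos u⟩ : Fin (G.k u))), z' ⟨u, j⟩ :=
        Finset.sum_congr rfl fun j hj => hne u j (Finset.mem_filter.mp hj).2
      have g1 := hz1 u
      have g2 := hz1' u
      linarith
    · exact hne u i hi
  · -- surjectivity
    intro w hw
    obtain ⟨hwZ, hwK⟩ := Submodule.mem_inf.mp hw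
    choose es hes using hG.nonempty
    set z : (Σ u : G.V0, Fin (G.k u)) → ℤ := fun p => - w (es p.1 p.2) with hzdef
    have hz1 : ∀ u : G.V0, ∑ i : Fin (G.k u), z ⟨u, i⟩ = 0 := by
      intro u
      have hsum := Z1_sum G hG hwZ u (es u) (hes u)
      simp only [hzdef]
      rw [Finset.sum_neg_distrib, hsum, neg_zero]
    have hPhiz : Φ z = w := by
      funext e
      obtain ⟨i, hi⟩ := hG.cover e
      rw [Phi_apply G hG Φ hΦ z hi]
      by_cases h : i = (⟨0, hG.kpos (G.r e)⟩ : Fin (G.k (G.r e)))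
      · rw [if_pos h]
        have e1 := sum_ne_zero_eq (hG.kpos (G.r e)) (fun j => z ⟨G.r e, j⟩)
        have g1 := hz1 (G.r e)
        have hc : w (es (G.r e) (⟨0, hG.kpos (G.r e)⟩ : Fin (G.k (G.r e)))) = w e :=
          Z1_const G hG hwZ (hes _ _) (h ▸ hi)
        have hzz : z ⟨G.r e, (⟨0, hG.kpos (G.r e)⟩ : Fin (G.k (G.r e)))⟩
            = - w (es (G.r e) (⟨0, hG.kpos (G.r e)⟩ : Fin (G.k (G.r e)))) := rfl
        linarith
      · rw [if_neg h]
        have hc : w (es (G.r e) i) = w e := Z1_const G hG hwZ (hes _ _) hi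
        simp only [hzdef, neg_neg]
        exact hc
    have hzker : z ∈ LinearMap.ker (oneC - Amap) := by
      apply (ker_char G hG oneC Amap h1 hA z).mpr
      refine ⟨hz1, ?_⟩
      have h5 := sstar_Phi G hG sstar hs Φ hΦ z hz1
      rw [hPhiz] at h5
      have h6 : sstar w = 0 := hwK
      rw [h5] at h6
      exact neg_eq_zero.mp h6
    exact ⟨z, hzker, hPhiz⟩
  · -- the inverse Υ
    intro n hn hker
    have hz1 : ∀ u : G.V0, ∑ i : Fin (G.k u),
        (fun p : Σ u : G.V0, Fin (G.k u) => n p.1 p.2) ⟨u, i⟩ = 0 := by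
      intro u
      have e1 := sum_ne_zero_eq (hG.kpos u) (fun i => n u i)
      have e2 := hn u
      simp only at e1 ⊢
      linarith
    have hW : (∑ᶠ u : G.V0, ∑ i ∈ Finset.univ.filter
          (fun i => i ≠ (⟨0, hG.kpos u⟩ : Fin (G.k u))), n u i • gammaB G hG.kpos u i)
        = ∑ u : G.V0, ∑ i ∈ Finset.univ.filter
          (fun i => i ≠ (⟨0, hG.kpos u⟩ : Fin (G.k u))), n u i • gammaB G hG.kpos u i :=
      finsum_eq_sum_of_fintype _
    have hPhiz : Φ (fun p : Σ u : G.V0, Fin (G.k u) => n p.1 p.2)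
        = ∑ u : G.V0, ∑ i ∈ Finset.univ.filter
          (fun i => i ≠ (⟨0, hG.kpos u⟩ : Fin (G.k u))), n u i • gammaB G hG.kpos u i := by
      rw [lin_apply Φ _, ← Finset.univ_sigma_univ, Finset.sum_sigma]
      apply Finset.sum_congr rfl
      intro u _
      rw [Finset.sum_filter]
      apply Finset.sum_congr rfl
      intro i _
      rw [hΦ ⟨u, i⟩]
      by_cases h : i = (⟨0, hG.kpos u⟩ : Fin (G.k u))
      · rw [if_pos h, if_neg (by simpa using h), smul_zero]
      · rw [if_neg h, if_pos h]
    constructor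
    · apply (ker_char G hG oneC Amap h1 hA _).mpr
      refine ⟨hz1, ?_⟩
      have h5 := sstar_Phi G hG sstar hs Φ hΦ (fun p : Σ u : G.V0, Fin (G.k u) => n p.1 p.2) hz1
      have h6 : sstar (∑ᶠ u : G.V0, ∑ i ∈ Finset.univ.filter
          (fun i => i ≠ (⟨0, hG.kpos u⟩ : Fin (G.k u))), n u i • gammaB G hG.kpos u i)
          = 0 := hker
      rw [hW, ← hPhiz, h5] at h6
      exact neg_eq_zero.mp h6
    · rw [hW]
      exact hPhiz
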